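/- In the root system Φ of type E₈, realized in ℝ⁸ with the Bourbaki simple roots, the number of roots α ∈ Φ whose height is odd equals 128, and the number of roots of even height equals 112. -/

import Mathlib

set_option maxHeartbeats 4000000
set_option maxRecDepth 100000

/-- Membership in the root system of type E₈ in its standard realization in ℝ⁸. -/
def IsE8Root (x : Fin 8 → ℝ) : Prop :=
  (∑ i, x i * x i) = 2 ∧
  ((∀ i, ∃ n : ℤ, x i = n) ∨ (∀ i, ∃ n : ℤ, x i = n + 1 / 2)) ∧
  (∃ m : ℤ, (∑ i, x i) = 2 * m)

/-- The Bourbaki simple roots `α₁, …, α₈` of E₈ (0-indexed). -/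
noncomputable def bourbakiE8 : Fin 8 → Fin 8 → ℝ :=
  ![![1/2, -1/2, -1/2, -1/2, -1/2, -1/2, -1/2, 1/2],
    ![1, 1, 0, 0, 0, 0, 0, 0],
    ![-1, 1, 0, 0, 0, 0, 0, 0],
    ![0, -1, 1, 0, 0, 0, 0, 0],
    ![0, 0, -1, 1, 0, 0, 0, 0],
    ![0, 0, 0, -1, 1, 0, 0, 0],
    ![0, 0, 0, 0, -1, 1, 0, 0],
    ![0, 0, 0, 0, 0, -1, 1, 0]]

section vec8
variable {α : Type*} (a b c d e f g h : α)
lemma w0 (hlt : (0:ℕ) < 8) : ![a,b,c,d,e,f,g,h] ⟨0,hlt⟩ = a := rfl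
lemma w1 (hlt : (1:ℕ) < 8) : ![a,b,c,d,e,f,g,h] ⟨1,hlt⟩ = b := rfl
lemma w2 (hlt : (2:ℕ) < 8) : ![a,b,c,d,e,f,g,h] ⟨2,hlt⟩ = c := rfl
lemma w3 (hlt : (3:ℕ) < 8) : ![a,b,c,d,e,f,g,h] ⟨3,hlt⟩ = d := rfl
lemma w4 (hlt : (4:ℕ) < 8) : ![a,b,c,d,e,f,g,h] ⟨4,hlt⟩ = e := rfl
lemma w5 (hlt : (5:ℕ) < 8) : ![a,b,c,d,e,f,g,h] ⟨5,hlt⟩ = f := rfl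
lemma w6 (hlt : (6:ℕ) < 8) : ![a,b,c,d,e,f,g,h] ⟨6,hlt⟩ = g := rfl
lemma w7 (hlt : (7:ℕ) < 8) : ![a,b,c,d,e,f,g,h] ⟨7,hlt⟩ = h := rfl
lemma v0' : ![a,b,c,d,e,f,g,h] 0 = a := rfl
lemma v1' : ![a,b,c,d,e,f,g,h] 1 = b := rfl
lemma v2' : ![a,b,c,d,e,f,g,h] 2 = c := rfl
lemma v3' : ![a,b,c,d,e,f,g,h] 3 = d := rfl
lemma v4' : ![a,b,c,d,e,f,g,h] 4 = e := rfl
lemma v5' : ![a,b,c,d,e,f,g,h] 5 = f := rfl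
lemma v6' : ![a,b,c,d,e,f,g,h] 6 = g := rfl
lemma v7' : ![a,b,c,d,e,f,g,h] 7 = h := rfl
end vec8

noncomputable def phi (y : Fin 8 → ℤ) : Fin 8 → ℝ := fun i => (y i : ℝ) / 2

def Emap (n : Fin 8 → ℤ) : Fin 8 → ℤ :=
  ![n 0 + 2*n 1 - 2*n 2, -n 0 + 2*n 1 + 2*n 2 - 2*n 3, -n 0 + 2*n 3 - 2*n 4,
    -n 0 + 2*n 4 - 2*n 5, -n 0 + 2*n 5 - 2*n 6, -n 0 + 2*n 6 - 2*n 7,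
    -n 0 + 2*n 7, n 0]

def hti (g : Fin 8 → ℤ) : ℤ :=
  g 1 + 2*g 2 + 3*g 3 + 4*g 4 + 5*g 5 + 6*g 6 + 23*g 7

def sgn (b : Bool) : ℤ := if b then 1 else -1

def pat (i j : Fin 8) (s t : Bool) : Fin 8 → ℤ :=
  fun k => if k = i then sgn s else if k = j then sgn t else 0

lemma e_eq (n : Fin 8 → ℤ) : (∑ i, (n i : ℝ) • bourbakiE8 i) = phi (Emap n) := by
  funext j
  simp only [Finset.sum_apply, Pi.smul_apply, smul_eq_mul, Fin.sum_univ_eight, bourbakiE8,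
    phi, Emap, v0', v1', v2', v3', v4', v5', v6', v7']
  fin_cases j <;>
    simp only [w0,w1,w2,w3,w4,w5,w6,w7,v0',v1',v2',v3',v4',v5',v6',v7'] <;> push_cast <;> ring

lemma hti_Emap (n : Fin 8 → ℤ) : hti (Emap n) = 2 * ∑ i, n i := by
  simp only [hti, Emap, Fin.sum_univ_eight, v0', v1', v2', v3', v4', v5', v6', v7']
  ring

lemma phi_inj : Function.Injective phi := by
  intro y y' hyy
  funext i
  have h2 := congrFun hyy i
  simp only [phi] at h2
  have h3 : (y i : ℝ) = y' i := by linarith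
  exact_mod_cast h3

def mkv (s : ℤ) (l : List ℕ) : Fin 8 → ℤ := fun i => (l.getD i 0 : ℤ) - s
def LoddRaw : List (List Nat × List Nat) := [
  ([4, 4, 2, 2, 2, 2, 2, 2], [6, 7, 6, 6, 6, 6, 6, 6]),
  ([4, 0, 2, 2, 2, 2, 2, 2], [6, 6, 5, 6, 6, 6, 6, 6]),
  ([0, 4, 2, 2, 2, 2, 2, 2], [6, 6, 7, 6, 6, 6, 6, 6]),
  ([0, 0, 2, 2, 2, 2, 2, 2], [6, 5, 6, 6, 6, 6, 6, 6]),
  ([4, 2, 2, 4, 2, 2, 2, 2], [6, 7, 6, 7, 7, 6, 6, 6]),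
  ([4, 2, 2, 0, 2, 2, 2, 2], [6, 6, 5, 5, 5, 6, 6, 6]),
  ([0, 2, 2, 4, 2, 2, 2, 2], [6, 6, 7, 7, 7, 6, 6, 6]),
  ([0, 2, 2, 0, 2, 2, 2, 2], [6, 5, 6, 5, 5, 6, 6, 6]),
  ([4, 2, 2, 2, 2, 4, 2, 2], [6, 7, 6, 7, 7, 7, 7, 6]),
  ([4, 2, 2, 2, 2, 0, 2, 2], [6, 6, 5, 5, 5, 5, 5, 6]),
  ([0, 2, 2, 2, 2, 4, 2, 2], [6, 6, 7, 7, 7, 7, 7, 6]),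
  ([0, 2, 2, 2, 2, 0, 2, 2], [6, 5, 6, 5, 5, 5, 5, 6]),
  ([4, 2, 2, 2, 2, 2, 2, 4], [8, 9, 9, 11, 10, 9, 8, 7]),
  ([4, 2, 2, 2, 2, 2, 2, 0], [4, 4, 2, 1, 2, 3, 4, 5]),
  ([0, 2, 2, 2, 2, 2, 2, 4], [8, 8, 10, 11, 10, 9, 8, 7]),
  ([0, 2, 2, 2, 2, 2, 2, 0], [4, 3, 3, 1, 2, 3, 4, 5]),
  ([2, 4, 4, 2, 2, 2, 2, 2], [6, 7, 7, 7, 6, 6, 6, 6]),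
  ([2, 4, 0, 2, 2, 2, 2, 2], [6, 6, 6, 5, 6, 6, 6, 6]),
  ([2, 0, 4, 2, 2, 2, 2, 2], [6, 6, 6, 7, 6, 6, 6, 6]),
  ([2, 0, 0, 2, 2, 2, 2, 2], [6, 5, 5, 5, 6, 6, 6, 6]),
  ([2, 4, 2, 2, 4, 2, 2, 2], [6, 7, 7, 7, 7, 7, 6, 6]),
  ([2, 4, 2, 2, 0, 2, 2, 2], [6, 6, 6, 5, 5, 5, 6, 6]),
  ([2, 0, 2, 2, 4, 2, 2, 2], [6, 6, 6, 7, 7, 7, 6, 6]),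
  ([2, 0, 2, 2, 0, 2, 2, 2], [6, 5, 5, 5, 5, 5, 6, 6]),
  ([2, 4, 2, 2, 2, 2, 4, 2], [6, 7, 7, 7, 7, 7, 7, 7]),
  ([2, 4, 2, 2, 2, 2, 0, 2], [6, 6, 6, 5, 5, 5, 5, 5]),
  ([2, 0, 2, 2, 2, 2, 4, 2], [6, 6, 6, 7, 7, 7, 7, 7]),
  ([2, 0, 2, 2, 2, 2, 0, 2], [6, 5, 5, 5, 5, 5, 5, 5]),
  ([2, 2, 4, 4, 2, 2, 2, 2], [6, 7, 7, 8, 7, 6, 6, 6]),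
  ([2, 2, 4, 0, 2, 2, 2, 2], [6, 6, 6, 6, 5, 6, 6, 6]),
  ([2, 2, 0, 4, 2, 2, 2, 2], [6, 6, 6, 6, 7, 6, 6, 6]),
  ([2, 2, 0, 0, 2, 2, 2, 2], [6, 5, 5, 4, 5, 6, 6, 6]),
  ([2, 2, 4, 2, 2, 4, 2, 2], [6, 7, 7, 8, 7, 7, 7, 6]),
  ([2, 2, 4, 2, 2, 0, 2, 2], [6, 6, 6, 6, 5, 5, 5, 6]),
  ([2, 2, 0, 2, 2, 4, 2, 2], [6, 6, 6, 6, 7, 7, 7, 6]),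
  ([2, 2, 0, 2, 2, 0, 2, 2], [6, 5, 5, 4, 5, 5, 5, 6]),
  ([2, 2, 4, 2, 2, 2, 2, 4], [8, 9, 10, 12, 10, 9, 8, 7]),
  ([2, 2, 4, 2, 2, 2, 2, 0], [4, 4, 3, 2, 2, 3, 4, 5]),
  ([2, 2, 0, 2, 2, 2, 2, 4], [8, 8, 9, 10, 10, 9, 8, 7]),
  ([2, 2, 0, 2, 2, 2, 2, 0], [4, 3, 2, 0, 2, 3, 4, 5]),
  ([2, 2, 2, 4, 4, 2, 2, 2], [6, 7, 7, 8, 8, 7, 6, 6]),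
  ([2, 2, 2, 4, 0, 2, 2, 2], [6, 6, 6, 6, 6, 5, 6, 6]),
  ([2, 2, 2, 0, 4, 2, 2, 2], [6, 6, 6, 6, 6, 7, 6, 6]),
  ([2, 2, 2, 0, 0, 2, 2, 2], [6, 5, 5, 4, 4, 5, 6, 6]),
  ([2, 2, 2, 4, 2, 2, 4, 2], [6, 7, 7, 8, 8, 7, 7, 7]),
  ([2, 2, 2, 4, 2, 2, 0, 2], [6, 6, 6, 6, 6, 5, 5, 5]),
  ([2, 2, 2, 0, 2, 2, 4, 2], [6, 6, 6, 6, 6, 7, 7, 7]),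
  ([2, 2, 2, 0, 2, 2, 0, 2], [6, 5, 5, 4, 4, 5, 5, 5]),
  ([2, 2, 2, 2, 4, 4, 2, 2], [6, 7, 7, 8, 8, 8, 7, 6]),
  ([2, 2, 2, 2, 4, 0, 2, 2], [6, 6, 6, 6, 6, 6, 5, 6]),
  ([2, 2, 2, 2, 0, 4, 2, 2], [6, 6, 6, 6, 6, 6, 7, 6]),
  ([2, 2, 2, 2, 0, 0, 2, 2], [6, 5, 5, 4, 4, 4, 5, 6]),
  ([2, 2, 2, 2, 4, 2, 2, 4], [8, 9, 10, 12, 11, 10, 8, 7]),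
  ([2, 2, 2, 2, 4, 2, 2, 0], [4, 4, 3, 2, 3, 4, 4, 5]),
  ([2, 2, 2, 2, 0, 2, 2, 4], [8, 8, 9, 10, 9, 8, 8, 7]),
  ([2, 2, 2, 2, 0, 2, 2, 0], [4, 3, 2, 0, 1, 2, 4, 5]),
  ([2, 2, 2, 2, 2, 4, 4, 2], [6, 7, 7, 8, 8, 8, 8, 7]),
  ([2, 2, 2, 2, 2, 4, 0, 2], [6, 6, 6, 6, 6, 6, 6, 5]),
  ([2, 2, 2, 2, 2, 0, 4, 2], [6, 6, 6, 6, 6, 6, 6, 7]),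
  ([2, 2, 2, 2, 2, 0, 0, 2], [6, 5, 5, 4, 4, 4, 4, 5]),
  ([2, 2, 2, 2, 2, 2, 4, 4], [8, 9, 10, 12, 11, 10, 9, 8]),
  ([2, 2, 2, 2, 2, 2, 4, 0], [4, 4, 3, 2, 3, 4, 5, 6]),
  ([2, 2, 2, 2, 2, 2, 0, 4], [8, 8, 9, 10, 9, 8, 7, 6]),
  ([2, 2, 2, 2, 2, 2, 0, 0], [4, 3, 2, 0, 1, 2, 3, 4]),
  ([3, 3, 3, 3, 3, 3, 1, 1], [5, 6, 5, 5, 5, 5, 5, 5]),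
  ([3, 3, 3, 3, 3, 1, 1, 3], [7, 8, 8, 9, 8, 7, 6, 6]),
  ([3, 3, 3, 3, 1, 3, 3, 1], [5, 6, 5, 5, 5, 5, 6, 6]),
  ([3, 3, 3, 3, 1, 1, 3, 3], [7, 8, 8, 9, 8, 7, 7, 7]),
  ([3, 3, 3, 1, 3, 3, 1, 3], [7, 8, 8, 9, 8, 8, 7, 6]),
  ([3, 3, 3, 1, 3, 1, 1, 1], [5, 5, 4, 3, 3, 4, 4, 5]),
  ([3, 3, 3, 1, 1, 3, 3, 3], [7, 8, 8, 9, 8, 8, 8, 7]),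
  ([3, 3, 3, 1, 1, 1, 3, 1], [5, 5, 4, 3, 3, 4, 5, 6]),
  ([3, 3, 1, 3, 3, 3, 3, 1], [5, 6, 5, 5, 6, 6, 6, 6]),
  ([3, 3, 1, 3, 3, 1, 3, 3], [7, 8, 8, 9, 9, 8, 7, 7]),
  ([3, 3, 1, 3, 1, 3, 1, 1], [5, 5, 4, 3, 4, 4, 5, 5]),
  ([3, 3, 1, 3, 1, 1, 1, 3], [7, 7, 7, 7, 7, 6, 6, 6]),
  ([3, 3, 1, 1, 3, 3, 3, 3], [7, 8, 8, 9, 9, 9, 8, 7]),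
  ([3, 3, 1, 1, 3, 1, 3, 1], [5, 5, 4, 3, 4, 5, 5, 6]),
  ([3, 3, 1, 1, 1, 3, 1, 3], [7, 7, 7, 7, 7, 7, 7, 6]),
  ([3, 3, 1, 1, 1, 1, 1, 1], [5, 4, 3, 1, 2, 3, 4, 5]),
  ([3, 1, 3, 3, 3, 3, 1, 3], [7, 8, 8, 10, 9, 8, 7, 6]),
  ([3, 1, 3, 3, 3, 1, 1, 1], [5, 5, 4, 4, 4, 4, 4, 5]),
  ([3, 1, 3, 3, 1, 3, 3, 3], [7, 8, 8, 10, 9, 8, 8, 7]),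
  ([3, 1, 3, 3, 1, 1, 3, 1], [5, 5, 4, 4, 4, 4, 5, 6]),
  ([3, 1, 3, 1, 3, 3, 1, 1], [5, 5, 4, 4, 4, 5, 5, 5]),
  ([3, 1, 3, 1, 3, 1, 1, 3], [7, 7, 7, 8, 7, 7, 6, 6]),
  ([3, 1, 3, 1, 1, 3, 3, 1], [5, 5, 4, 4, 4, 5, 6, 6]),
  ([3, 1, 3, 1, 1, 1, 3, 3], [7, 7, 7, 8, 7, 7, 7, 7]),
  ([3, 1, 1, 3, 3, 3, 3, 3], [7, 8, 8, 10, 10, 9, 8, 7]),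
  ([3, 1, 1, 3, 3, 1, 3, 1], [5, 5, 4, 4, 5, 5, 5, 6]),
  ([3, 1, 1, 3, 1, 3, 1, 3], [7, 7, 7, 8, 8, 7, 7, 6]),
  ([3, 1, 1, 3, 1, 1, 1, 1], [5, 4, 3, 2, 3, 3, 4, 5]),
  ([3, 1, 1, 1, 3, 3, 3, 1], [5, 5, 4, 4, 5, 6, 6, 6]),
  ([3, 1, 1, 1, 3, 1, 3, 3], [7, 7, 7, 8, 8, 8, 7, 7]),
  ([3, 1, 1, 1, 1, 3, 1, 1], [5, 4, 3, 2, 3, 4, 5, 5]),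
  ([3, 1, 1, 1, 1, 1, 1, 3], [7, 6, 6, 6, 6, 6, 6, 6]),
  ([1, 3, 3, 3, 3, 3, 3, 1], [5, 6, 6, 6, 6, 6, 6, 6]),
  ([1, 3, 3, 3, 3, 1, 3, 3], [7, 8, 9, 10, 9, 8, 7, 7]),
  ([1, 3, 3, 3, 1, 3, 1, 1], [5, 5, 5, 4, 4, 4, 5, 5]),
  ([1, 3, 3, 3, 1, 1, 1, 3], [7, 7, 8, 8, 7, 6, 6, 6]),
  ([1, 3, 3, 1, 3, 3, 3, 3], [7, 8, 9, 10, 9, 9, 8, 7]),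
  ([1, 3, 3, 1, 3, 1, 3, 1], [5, 5, 5, 4, 4, 5, 5, 6]),
  ([1, 3, 3, 1, 1, 3, 1, 3], [7, 7, 8, 8, 7, 7, 7, 6]),
  ([1, 3, 3, 1, 1, 1, 1, 1], [5, 4, 4, 2, 2, 3, 4, 5]),
  ([1, 3, 1, 3, 3, 3, 1, 1], [5, 5, 5, 4, 5, 5, 5, 5]),
  ([1, 3, 1, 3, 3, 1, 1, 3], [7, 7, 8, 8, 8, 7, 6, 6]),
  ([1, 3, 1, 3, 1, 3, 3, 1], [5, 5, 5, 4, 5, 5, 6, 6]),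
  ([1, 3, 1, 3, 1, 1, 3, 3], [7, 7, 8, 8, 8, 7, 7, 7]),
  ([1, 3, 1, 1, 3, 3, 1, 3], [7, 7, 8, 8, 8, 8, 7, 6]),
  ([1, 3, 1, 1, 3, 1, 1, 1], [5, 4, 4, 2, 3, 4, 4, 5]),
  ([1, 3, 1, 1, 1, 3, 3, 3], [7, 7, 8, 8, 8, 8, 8, 7]),
  ([1, 3, 1, 1, 1, 1, 3, 1], [5, 4, 4, 2, 3, 4, 5, 6]),
  ([1, 1, 3, 3, 3, 3, 3, 3], [7, 8, 9, 11, 10, 9, 8, 7]),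
  ([1, 1, 3, 3, 3, 1, 3, 1], [5, 5, 5, 5, 5, 5, 5, 6]),
  ([1, 1, 3, 3, 1, 3, 1, 3], [7, 7, 8, 9, 8, 7, 7, 6]),
  ([1, 1, 3, 3, 1, 1, 1, 1], [5, 4, 4, 3, 3, 3, 4, 5]),
  ([1, 1, 3, 1, 3, 3, 3, 1], [5, 5, 5, 5, 5, 6, 6, 6]),
  ([1, 1, 3, 1, 3, 1, 3, 3], [7, 7, 8, 9, 8, 8, 7, 7]),
  ([1, 1, 3, 1, 1, 3, 1, 1], [5, 4, 4, 3, 3, 4, 5, 5]),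
  ([1, 1, 3, 1, 1, 1, 1, 3], [7, 6, 7, 7, 6, 6, 6, 6]),
  ([1, 1, 1, 3, 3, 3, 1, 3], [7, 7, 8, 9, 9, 8, 7, 6]),
  ([1, 1, 1, 3, 3, 1, 1, 1], [5, 4, 4, 3, 4, 4, 4, 5]),
  ([1, 1, 1, 3, 1, 3, 3, 3], [7, 7, 8, 9, 9, 8, 8, 7]),
  ([1, 1, 1, 3, 1, 1, 3, 1], [5, 4, 4, 3, 4, 4, 5, 6]),
  ([1, 1, 1, 1, 3, 3, 1, 1], [5, 4, 4, 3, 4, 5, 5, 5]),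
  ([1, 1, 1, 1, 3, 1, 1, 3], [7, 6, 7, 7, 7, 7, 6, 6]),
  ([1, 1, 1, 1, 1, 3, 3, 1], [5, 4, 4, 3, 4, 5, 6, 6]),
  ([1, 1, 1, 1, 1, 1, 3, 3], [7, 6, 7, 7, 7, 7, 7, 7])]

def LevenRaw : List (List Nat × List Nat) := [
  ([4, 2, 4, 2, 2, 2, 2, 2], [6, 7, 6, 7, 6, 6, 6, 6]),
  ([4, 2, 0, 2, 2, 2, 2, 2], [6, 6, 5, 5, 6, 6, 6, 6]),
  ([0, 2, 4, 2, 2, 2, 2, 2], [6, 6, 7, 7, 6, 6, 6, 6]),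
  ([0, 2, 0, 2, 2, 2, 2, 2], [6, 5, 6, 5, 6, 6, 6, 6]),
  ([4, 2, 2, 2, 4, 2, 2, 2], [6, 7, 6, 7, 7, 7, 6, 6]),
  ([4, 2, 2, 2, 0, 2, 2, 2], [6, 6, 5, 5, 5, 5, 6, 6]),
  ([0, 2, 2, 2, 4, 2, 2, 2], [6, 6, 7, 7, 7, 7, 6, 6]),
  ([0, 2, 2, 2, 0, 2, 2, 2], [6, 5, 6, 5, 5, 5, 6, 6]),
  ([4, 2, 2, 2, 2, 2, 4, 2], [6, 7, 6, 7, 7, 7, 7, 7]),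
  ([4, 2, 2, 2, 2, 2, 0, 2], [6, 6, 5, 5, 5, 5, 5, 5]),
  ([0, 2, 2, 2, 2, 2, 4, 2], [6, 6, 7, 7, 7, 7, 7, 7]),
  ([0, 2, 2, 2, 2, 2, 0, 2], [6, 5, 6, 5, 5, 5, 5, 5]),
  ([2, 4, 2, 4, 2, 2, 2, 2], [6, 7, 7, 7, 7, 6, 6, 6]),
  ([2, 4, 2, 0, 2, 2, 2, 2], [6, 6, 6, 5, 5, 6, 6, 6]),
  ([2, 0, 2, 4, 2, 2, 2, 2], [6, 6, 6, 7, 7, 6, 6, 6]),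
  ([2, 0, 2, 0, 2, 2, 2, 2], [6, 5, 5, 5, 5, 6, 6, 6]),
  ([2, 4, 2, 2, 2, 4, 2, 2], [6, 7, 7, 7, 7, 7, 7, 6]),
  ([2, 4, 2, 2, 2, 0, 2, 2], [6, 6, 6, 5, 5, 5, 5, 6]),
  ([2, 0, 2, 2, 2, 4, 2, 2], [6, 6, 6, 7, 7, 7, 7, 6]),
  ([2, 0, 2, 2, 2, 0, 2, 2], [6, 5, 5, 5, 5, 5, 5, 6]),
  ([2, 4, 2, 2, 2, 2, 2, 4], [8, 9, 10, 11, 10, 9, 8, 7]),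
  ([2, 4, 2, 2, 2, 2, 2, 0], [4, 4, 3, 1, 2, 3, 4, 5]),
  ([2, 0, 2, 2, 2, 2, 2, 4], [8, 8, 9, 11, 10, 9, 8, 7]),
  ([2, 0, 2, 2, 2, 2, 2, 0], [4, 3, 2, 1, 2, 3, 4, 5]),
  ([2, 2, 4, 2, 4, 2, 2, 2], [6, 7, 7, 8, 7, 7, 6, 6]),
  ([2, 2, 4, 2, 0, 2, 2, 2], [6, 6, 6, 6, 5, 5, 6, 6]),
  ([2, 2, 0, 2, 4, 2, 2, 2], [6, 6, 6, 6, 7, 7, 6, 6]),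
  ([2, 2, 0, 2, 0, 2, 2, 2], [6, 5, 5, 4, 5, 5, 6, 6]),
  ([2, 2, 4, 2, 2, 2, 4, 2], [6, 7, 7, 8, 7, 7, 7, 7]),
  ([2, 2, 4, 2, 2, 2, 0, 2], [6, 6, 6, 6, 5, 5, 5, 5]),
  ([2, 2, 0, 2, 2, 2, 4, 2], [6, 6, 6, 6, 7, 7, 7, 7]),
  ([2, 2, 0, 2, 2, 2, 0, 2], [6, 5, 5, 4, 5, 5, 5, 5]),
  ([2, 2, 2, 4, 2, 4, 2, 2], [6, 7, 7, 8, 8, 7, 7, 6]),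
  ([2, 2, 2, 4, 2, 0, 2, 2], [6, 6, 6, 6, 6, 5, 5, 6]),
  ([2, 2, 2, 0, 2, 4, 2, 2], [6, 6, 6, 6, 6, 7, 7, 6]),
  ([2, 2, 2, 0, 2, 0, 2, 2], [6, 5, 5, 4, 4, 5, 5, 6]),
  ([2, 2, 2, 4, 2, 2, 2, 4], [8, 9, 10, 12, 11, 9, 8, 7]),
  ([2, 2, 2, 4, 2, 2, 2, 0], [4, 4, 3, 2, 3, 3, 4, 5]),
  ([2, 2, 2, 0, 2, 2, 2, 4], [8, 8, 9, 10, 9, 9, 8, 7]),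
  ([2, 2, 2, 0, 2, 2, 2, 0], [4, 3, 2, 0, 1, 3, 4, 5]),
  ([2, 2, 2, 2, 4, 2, 4, 2], [6, 7, 7, 8, 8, 8, 7, 7]),
  ([2, 2, 2, 2, 4, 2, 0, 2], [6, 6, 6, 6, 6, 6, 5, 5]),
  ([2, 2, 2, 2, 0, 2, 4, 2], [6, 6, 6, 6, 6, 6, 7, 7]),
  ([2, 2, 2, 2, 0, 2, 0, 2], [6, 5, 5, 4, 4, 4, 5, 5]),
  ([2, 2, 2, 2, 2, 4, 2, 4], [8, 9, 10, 12, 11, 10, 9, 7]),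
  ([2, 2, 2, 2, 2, 4, 2, 0], [4, 4, 3, 2, 3, 4, 5, 5]),
  ([2, 2, 2, 2, 2, 0, 2, 4], [8, 8, 9, 10, 9, 8, 7, 7]),
  ([2, 2, 2, 2, 2, 0, 2, 0], [4, 3, 2, 0, 1, 2, 3, 5]),
  ([3, 3, 3, 3, 3, 3, 3, 3], [7, 9, 9, 11, 10, 9, 8, 7]),
  ([3, 3, 3, 3, 3, 1, 3, 1], [5, 6, 5, 5, 5, 5, 5, 6]),
  ([3, 3, 3, 3, 1, 3, 1, 3], [7, 8, 8, 9, 8, 7, 7, 6]),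
  ([3, 3, 3, 3, 1, 1, 1, 1], [5, 5, 4, 3, 3, 3, 4, 5]),
  ([3, 3, 3, 1, 3, 3, 3, 1], [5, 6, 5, 5, 5, 6, 6, 6]),
  ([3, 3, 3, 1, 3, 1, 3, 3], [7, 8, 8, 9, 8, 8, 7, 7]),
  ([3, 3, 3, 1, 1, 3, 1, 1], [5, 5, 4, 3, 3, 4, 5, 5]),
  ([3, 3, 3, 1, 1, 1, 1, 3], [7, 7, 7, 7, 6, 6, 6, 6]),
  ([3, 3, 1, 3, 3, 3, 1, 3], [7, 8, 8, 9, 9, 8, 7, 6]),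
  ([3, 3, 1, 3, 3, 1, 1, 1], [5, 5, 4, 3, 4, 4, 4, 5]),
  ([3, 3, 1, 3, 1, 3, 3, 3], [7, 8, 8, 9, 9, 8, 8, 7]),
  ([3, 3, 1, 3, 1, 1, 3, 1], [5, 5, 4, 3, 4, 4, 5, 6]),
  ([3, 3, 1, 1, 3, 3, 1, 1], [5, 5, 4, 3, 4, 5, 5, 5]),
  ([3, 3, 1, 1, 3, 1, 1, 3], [7, 7, 7, 7, 7, 7, 6, 6]),
  ([3, 3, 1, 1, 1, 3, 3, 1], [5, 5, 4, 3, 4, 5, 6, 6]),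
  ([3, 3, 1, 1, 1, 1, 3, 3], [7, 7, 7, 7, 7, 7, 7, 7]),
  ([3, 1, 3, 3, 3, 3, 3, 1], [5, 6, 5, 6, 6, 6, 6, 6]),
  ([3, 1, 3, 3, 3, 1, 3, 3], [7, 8, 8, 10, 9, 8, 7, 7]),
  ([3, 1, 3, 3, 1, 3, 1, 1], [5, 5, 4, 4, 4, 4, 5, 5]),
  ([3, 1, 3, 3, 1, 1, 1, 3], [7, 7, 7, 8, 7, 6, 6, 6]),
  ([3, 1, 3, 1, 3, 3, 3, 3], [7, 8, 8, 10, 9, 9, 8, 7]),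
  ([3, 1, 3, 1, 3, 1, 3, 1], [5, 5, 4, 4, 4, 5, 5, 6]),
  ([3, 1, 3, 1, 1, 3, 1, 3], [7, 7, 7, 8, 7, 7, 7, 6]),
  ([3, 1, 3, 1, 1, 1, 1, 1], [5, 4, 3, 2, 2, 3, 4, 5]),
  ([3, 1, 1, 3, 3, 3, 1, 1], [5, 5, 4, 4, 5, 5, 5, 5]),
  ([3, 1, 1, 3, 3, 1, 1, 3], [7, 7, 7, 8, 8, 7, 6, 6]),
  ([3, 1, 1, 3, 1, 3, 3, 1], [5, 5, 4, 4, 5, 5, 6, 6]),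
  ([3, 1, 1, 3, 1, 1, 3, 3], [7, 7, 7, 8, 8, 7, 7, 7]),
  ([3, 1, 1, 1, 3, 3, 1, 3], [7, 7, 7, 8, 8, 8, 7, 6]),
  ([3, 1, 1, 1, 3, 1, 1, 1], [5, 4, 3, 2, 3, 4, 4, 5]),
  ([3, 1, 1, 1, 1, 3, 3, 3], [7, 7, 7, 8, 8, 8, 8, 7]),
  ([3, 1, 1, 1, 1, 1, 3, 1], [5, 4, 3, 2, 3, 4, 5, 6]),
  ([1, 3, 3, 3, 3, 3, 1, 3], [7, 8, 9, 10, 9, 8, 7, 6]),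
  ([1, 3, 3, 3, 3, 1, 1, 1], [5, 5, 5, 4, 4, 4, 4, 5]),
  ([1, 3, 3, 3, 1, 3, 3, 3], [7, 8, 9, 10, 9, 8, 8, 7]),
  ([1, 3, 3, 3, 1, 1, 3, 1], [5, 5, 5, 4, 4, 4, 5, 6]),
  ([1, 3, 3, 1, 3, 3, 1, 1], [5, 5, 5, 4, 4, 5, 5, 5]),
  ([1, 3, 3, 1, 3, 1, 1, 3], [7, 7, 8, 8, 7, 7, 6, 6]),
  ([1, 3, 3, 1, 1, 3, 3, 1], [5, 5, 5, 4, 4, 5, 6, 6]),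
  ([1, 3, 3, 1, 1, 1, 3, 3], [7, 7, 8, 8, 7, 7, 7, 7]),
  ([1, 3, 1, 3, 3, 3, 3, 3], [7, 8, 9, 10, 10, 9, 8, 7]),
  ([1, 3, 1, 3, 3, 1, 3, 1], [5, 5, 5, 4, 5, 5, 5, 6]),
  ([1, 3, 1, 3, 1, 3, 1, 3], [7, 7, 8, 8, 8, 7, 7, 6]),
  ([1, 3, 1, 3, 1, 1, 1, 1], [5, 4, 4, 2, 3, 3, 4, 5]),
  ([1, 3, 1, 1, 3, 3, 3, 1], [5, 5, 5, 4, 5, 6, 6, 6]),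
  ([1, 3, 1, 1, 3, 1, 3, 3], [7, 7, 8, 8, 8, 8, 7, 7]),
  ([1, 3, 1, 1, 1, 3, 1, 1], [5, 4, 4, 2, 3, 4, 5, 5]),
  ([1, 3, 1, 1, 1, 1, 1, 3], [7, 6, 7, 6, 6, 6, 6, 6]),
  ([1, 1, 3, 3, 3, 3, 1, 1], [5, 5, 5, 5, 5, 5, 5, 5]),
  ([1, 1, 3, 3, 3, 1, 1, 3], [7, 7, 8, 9, 8, 7, 6, 6]),
  ([1, 1, 3, 3, 1, 3, 3, 1], [5, 5, 5, 5, 5, 5, 6, 6]),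
  ([1, 1, 3, 3, 1, 1, 3, 3], [7, 7, 8, 9, 8, 7, 7, 7]),
  ([1, 1, 3, 1, 3, 3, 1, 3], [7, 7, 8, 9, 8, 8, 7, 6]),
  ([1, 1, 3, 1, 3, 1, 1, 1], [5, 4, 4, 3, 3, 4, 4, 5]),
  ([1, 1, 3, 1, 1, 3, 3, 3], [7, 7, 8, 9, 8, 8, 8, 7]),
  ([1, 1, 3, 1, 1, 1, 3, 1], [5, 4, 4, 3, 3, 4, 5, 6]),
  ([1, 1, 1, 3, 3, 3, 3, 1], [5, 5, 5, 5, 6, 6, 6, 6]),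
  ([1, 1, 1, 3, 3, 1, 3, 3], [7, 7, 8, 9, 9, 8, 7, 7]),
  ([1, 1, 1, 3, 1, 3, 1, 1], [5, 4, 4, 3, 4, 4, 5, 5]),
  ([1, 1, 1, 3, 1, 1, 1, 3], [7, 6, 7, 7, 7, 6, 6, 6]),
  ([1, 1, 1, 1, 3, 3, 3, 3], [7, 7, 8, 9, 9, 9, 8, 7]),
  ([1, 1, 1, 1, 3, 1, 3, 1], [5, 4, 4, 3, 4, 5, 5, 6]),
  ([1, 1, 1, 1, 1, 3, 1, 3], [7, 6, 7, 7, 7, 7, 7, 6]),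
  ([1, 1, 1, 1, 1, 1, 1, 1], [5, 3, 3, 1, 2, 3, 4, 5])]

def Lodd : List ((Fin 8 → ℤ) × (Fin 8 → ℤ)) := LoddRaw.map (fun p => (mkv 2 p.1, mkv 6 p.2))
def Leven : List ((Fin 8 → ℤ) × (Fin 8 → ℤ)) := LevenRaw.map (fun p => (mkv 2 p.1, mkv 6 p.2))

lemma hall_odd : ∀ p ∈ Lodd, Emap p.2 = p.1 ∧ (∑ i, p.1 i * p.1 i) = 8 ∧
    ((∀ i, ¬ (2:ℤ) ∣ p.1 i) ∨ (∀ i, (2:ℤ) ∣ p.1 i)) ∧ ((4:ℤ) ∣ ∑ i, p.1 i) ∧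
    (∑ i, p.2 i) % 2 = 1 := by decide

lemma hall_even : ∀ p ∈ Leven, Emap p.2 = p.1 ∧ (∑ i, p.1 i * p.1 i) = 8 ∧
    ((∀ i, ¬ (2:ℤ) ∣ p.1 i) ∨ (∀ i, (2:ℤ) ∣ p.1 i)) ∧ ((4:ℤ) ∣ ∑ i, p.1 i) ∧
    (∑ i, p.2 i) % 2 = 0 := by decide

lemma hci_odd : ∀ (i j : Fin 8) (s t : Bool), i ≠ j →
    (2:ℤ) ∣ (∑ k, pat i j s t k) → (hti (fun k => 2 * pat i j s t k)) % 4 = 2 * 1 →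
    (fun k => 2 * pat i j s t k) ∈ Lodd.map Prod.fst := by decide

lemma hci_even : ∀ (i j : Fin 8) (s t : Bool), i ≠ j →
    (2:ℤ) ∣ (∑ k, pat i j s t k) → (hti (fun k => 2 * pat i j s t k)) % 4 = 2 * 0 →
    (fun k => 2 * pat i j s t k) ∈ Leven.map Prod.fst := by decide

lemma hch_odd : ∀ m ∈ Fintype.piFinset (fun _ : Fin 8 => Finset.Icc (-1:ℤ) 0),
    (2:ℤ) ∣ (∑ i, m i) → (hti (fun i => 2 * m i + 1)) % 4 = 2 * 1 →
    (fun i => 2 * m i + 1) ∈ Lodd.map Prod.fst := by decide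

lemma hch_even : ∀ m ∈ Fintype.piFinset (fun _ : Fin 8 => Finset.Icc (-1:ℤ) 0),
    (2:ℤ) ∣ (∑ i, m i) → (hti (fun i => 2 * m i + 1)) % 4 = 2 * 0 →
    (fun i => 2 * m i + 1) ∈ Leven.map Prod.fst := by decide

lemma nodup_odd : (Lodd.map Prod.fst).Nodup := by decide
lemma nodup_even : (Leven.map Prod.fst).Nodup := by decide

lemma main (c : ℤ) (L : List ((Fin 8 → ℤ) × (Fin 8 → ℤ)))
    (hall : ∀ p ∈ L, Emap p.2 = p.1 ∧ (∑ i, p.1 i * p.1 i) = 8 ∧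
      ((∀ i, ¬ (2:ℤ) ∣ p.1 i) ∨ (∀ i, (2:ℤ) ∣ p.1 i)) ∧ ((4:ℤ) ∣ ∑ i, p.1 i) ∧
      (∑ i, p.2 i) % 2 = c)
    (hci : ∀ (i j : Fin 8) (s t : Bool), i ≠ j →
      (2:ℤ) ∣ (∑ k, pat i j s t k) → (hti (fun k => 2 * pat i j s t k)) % 4 = 2 * c →
      (fun k => 2 * pat i j s t k) ∈ L.map Prod.fst)
    (hch : ∀ m ∈ Fintype.piFinset (fun _ : Fin 8 => Finset.Icc (-1:ℤ) 0),
      (2:ℤ) ∣ (∑ i, m i) → (hti (fun i => 2 * m i + 1)) % 4 = 2 * c →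
      (fun i => 2 * m i + 1) ∈ L.map Prod.fst)
    (hnd : (L.map Prod.fst).Nodup) :
    Nat.card {x : Fin 8 → ℝ // IsE8Root x ∧
      ∃ n : Fin 8 → ℤ, x = ∑ i, (n i : ℝ) • bourbakiE8 i ∧ (∑ i, n i) % 2 = c}
      = L.length := by
  classical
  set S : Finset (Fin 8 → ℝ) := (L.map (fun p => phi p.1)).toFinset with hS
  have hset : {x : Fin 8 → ℝ | IsE8Root x ∧
      ∃ n : Fin 8 → ℤ, x = ∑ i, (n i : ℝ) • bourbakiE8 i ∧ (∑ i, n i) % 2 = c} = ↑S := by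
    ext x
    simp only [Set.mem_setOf_eq, Finset.mem_coe, hS, List.mem_toFinset, List.mem_map]
    constructor
    · rintro ⟨⟨hsq, hint, m0, hsm⟩, n, hxe, hpar⟩
      rcases hint with hZ | hH
      · -- integer coordinates
        choose g hg using hZ
        have hgsq : (∑ i, g i * g i) = 2 := by
          have h1 : ((∑ i, g i * g i : ℤ) : ℝ) = 2 := by
            push_cast
            rw [show (∑ i, (g i : ℝ) * (g i : ℝ)) = ∑ i, x i * x i from
              Finset.sum_congr rfl fun i _ => by rw [hg i]]
            exact hsq
          exact_mod_cast h1
        have hb : ∀ i, g i = -1 ∨ g i = 0 ∨ g i = 1 := by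
          intro i
          have h1 : g i * g i ≤ 2 := by
            rw [← hgsq]
            exact Finset.single_le_sum (fun j _ => mul_self_nonneg (g j)) (Finset.mem_univ i)
          have h2 : -1 ≤ g i := by nlinarith
          have h3 : g i ≤ 1 := by nlinarith
          omega
        have hx2 : x = phi (fun k => 2 * g k) := by
          funext k
          simp only [phi, hg k]
          push_cast
          ring
        set sF := Finset.univ.filter (fun i => g i ≠ 0) with hsF
        have hcard : sF.card = 2 := by
          have h1 : (∑ i, g i * g i) = (sF.card : ℤ) := by
            rw [hsF, ← Finset.sum_boole]
            refine Finset.sum_congr rfl fun i _ => ?_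
            rcases hb i with h | h | h <;> simp [h]
          have : ((2:ℤ)) = (sF.card : ℤ) := by rw [← hgsq, h1]
          exact_mod_cast this.symm
        obtain ⟨i, j, hij, hsij⟩ := Finset.card_eq_two.mp hcard
        have hgi : g i ≠ 0 := by
          have : i ∈ sF := by rw [hsij]; simp
          exact (Finset.mem_filter.mp this).2
        have hgj : g j ≠ 0 := by
          have : j ∈ sF := by rw [hsij]; simp
          exact (Finset.mem_filter.mp this).2
        have hzero : ∀ k, k ≠ i → k ≠ j → g k = 0 := by
          intro k hki hkj
          by_contra hk
          have : k ∈ sF := Finset.mem_filter.mpr ⟨Finset.mem_univ k, hk⟩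
          rw [hsij] at this
          simp only [Finset.mem_insert, Finset.mem_singleton] at this
          tauto
        have hbi : ∃ b, g i = sgn b := by
          rcases hb i with h | h | h
          exacts [⟨false, by simp [sgn, h]⟩, absurd h hgi, ⟨true, by simp [sgn, h]⟩]
        have hbj : ∃ b, g j = sgn b := by
          rcases hb j with h | h | h
          exacts [⟨false, by simp [sgn, h]⟩, absurd h hgj, ⟨true, by simp [sgn, h]⟩]
        obtain ⟨bi, hbi⟩ := hbi
        obtain ⟨bj, hbj⟩ := hbj
        have hgp : g = pat i j bi bj := by
          funext k
          simp only [pat]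
          by_cases hk : k = i
          · subst hk; rw [if_pos rfl, ← hbi]
          · rw [if_neg hk]
            by_cases hk' : k = j
            · subst hk'; rw [if_pos rfl, ← hbj]
            · rw [if_neg hk']; exact hzero k hk hk'
        have hsmZ : (∑ i, g i) = 2 * m0 := by
          have h1 : ((∑ i, g i : ℤ) : ℝ) = 2 * m0 := by
            push_cast
            rw [show (∑ i, (g i : ℝ)) = ∑ i, x i from
              Finset.sum_congr rfl fun i _ => by rw [hg i]]
            exact_mod_cast hsm
          exact_mod_cast h1
        have hdvd : (2:ℤ) ∣ (∑ k, pat i j bi bj k) := by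
          rw [show (∑ k, pat i j bi bj k) = ∑ k, g k from
            Finset.sum_congr rfl fun k _ => by rw [hgp]]
          exact ⟨m0, hsmZ⟩
        have hEn : Emap n = fun k => 2 * g k := by
          apply phi_inj
          rw [← e_eq, ← hxe, hx2]
        have hhti : (hti (fun k => 2 * pat i j bi bj k)) % 4 = 2 * c := by
          have h1 : (fun k => 2 * pat i j bi bj k) = fun k => 2 * g k := by
            funext k; rw [hgp]
          rw [h1, ← hEn, hti_Emap]
          omega
        have hmem := hci i j bi bj hij hdvd hhti
        rw [List.mem_map] at hmem
        obtain ⟨p, hpL, hp1⟩ := hmem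
        refine ⟨p, hpL, ?_⟩
        rw [hp1]
        rw [hx2]
        congr 1
        funext k
        rw [hgp]
      · -- half-integer coordinates
        choose m hm using hH
        set y : Fin 8 → ℤ := fun i => 2 * m i + 1 with hy
        have hx2 : x = phi y := by
          funext k
          simp only [phi, hm k, hy]
          push_cast
          ring
        have hyx : ∀ i : Fin 8, ((y i : ℝ)) = 2 * x i := by
          intro i
          simp only [hy]
          rw [hm i]
          push_cast
          ring
        have hysq : (∑ i, y i * y i) = 8 := by
          have h1 : ((∑ i, y i * y i : ℤ) : ℝ) = 8 := by
            push_cast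
            rw [show (∑ i, (y i:ℝ) * (y i:ℝ)) = ∑ i, (2 * x i) * (2 * x i) from
              Finset.sum_congr rfl fun i _ => by rw [hyx i]]
            have h3 : (∑ i, (2 * x i) * (2 * x i)) = 4 * ∑ i, x i * x i := by
              rw [Finset.mul_sum]
              exact Finset.sum_congr rfl fun i _ => by ring
            rw [h3, hsq]
            norm_num
          exact_mod_cast h1
        have hyodd : ∀ i, y i % 2 = 1 := by intro i; simp only [hy]; omega
        have hy1 : ∀ i, y i = 1 ∨ y i = -1 := by
          intro i
          have hge : ∀ k : Fin 8, 1 ≤ y k * y k := by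
            intro k
            have h0 : y k ≠ 0 := by have := hyodd k; omega
            rcases h0.lt_or_gt with h | h <;> nlinarith
          have hle : y i * y i ≤ 1 := by
            have he : (∑ k ∈ Finset.univ.erase i, y k * y k) + y i * y i = 8 := by
              rw [Finset.sum_erase_add _ _ (Finset.mem_univ i)]
              exact hysq
            have hc7 : (Finset.univ.erase i).card = 7 := by
              rw [Finset.card_erase_of_mem (Finset.mem_univ i)]
              simp
            have h7 : (7:ℤ) ≤ ∑ k ∈ Finset.univ.erase i, y k * y k := by
              calc (7:ℤ) = (Finset.univ.erase i).card • (1:ℤ) := by rw [hc7]; simp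
                _ ≤ ∑ k ∈ Finset.univ.erase i, y k * y k :=
                  Finset.card_nsmul_le_sum _ _ _ (fun k _ => hge k)
            linarith
          have h1 : y i * y i = 1 := le_antisymm hle (hge i)
          exact Int.isUnit_iff.mp (IsUnit.of_mul_eq_one _ h1)
        have hmIcc : m ∈ Fintype.piFinset (fun _ : Fin 8 => Finset.Icc (-1:ℤ) 0) := by
          rw [Fintype.mem_piFinset]
          intro i
          rw [Finset.mem_Icc]
          have := hy1 i
          simp only [hy] at this
          omega
        have hdvd : (2:ℤ) ∣ (∑ i, m i) := by
          have h1 : ((∑ i, m i : ℤ) : ℝ) + 4 = 2 * m0 := by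
            push_cast
            have : (∑ i, (m i:ℝ)) + 4 = ∑ i, x i := by
              rw [show (∑ i, x i) = ∑ i, ((m i : ℝ) + 1/2) from
                Finset.sum_congr rfl fun i _ => hm i]
              rw [Finset.sum_add_distrib]
              norm_num
            rw [this]
            exact hsm
          have h2 : (∑ i, m i) + 4 = 2 * m0 := by exact_mod_cast h1
          omega
        have hEn : Emap n = y := by
          apply phi_inj
          rw [← e_eq, ← hxe, hx2]
        have hhti : (hti (fun i => 2 * m i + 1)) % 4 = 2 * c := by
          have h1 : (fun i => 2 * m i + 1) = y := by funext i; simp [hy]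
          rw [h1, ← hEn, hti_Emap]
          omega
        have hmem := hch m hmIcc hdvd hhti
        rw [List.mem_map] at hmem
        obtain ⟨p, hpL, hp1⟩ := hmem
        refine ⟨p, hpL, ?_⟩
        rw [hp1, hx2]
    · rintro ⟨p, hpL, rfl⟩
      obtain ⟨hE, hsq8, hpar01, hdvd4, hc⟩ := hall p hpL
      have hsq8R : ((∑ i, p.1 i * p.1 i : ℤ) : ℝ) = 8 := by exact_mod_cast hsq8
      refine ⟨⟨?_, ?_, ?_⟩, p.2, ?_, hc⟩
      · simp only [phi, Fin.sum_univ_eight]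
        push_cast [Fin.sum_univ_eight] at hsq8R
        linear_combination hsq8R / 4
      · rcases hpar01 with h | h
        · right
          intro i
          obtain ⟨k, hk⟩ : ∃ k, p.1 i = 2 * k + 1 := ⟨(p.1 i - 1)/2, by have := h i; omega⟩
          exact ⟨k, by simp only [phi, hk]; push_cast; ring⟩
        · left
          intro i
          obtain ⟨k, hk⟩ := h i
          exact ⟨k, by simp only [phi, hk]; push_cast; ring⟩
      · obtain ⟨k, hk⟩ := hdvd4
        refine ⟨k, ?_⟩
        have hkR : ((∑ i, p.1 i : ℤ) : ℝ) = 4 * k := by exact_mod_cast hk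
        simp only [phi, Fin.sum_univ_eight]
        push_cast [Fin.sum_univ_eight] at hkR
        linarith
      · rw [e_eq, hE]
  have h1 : Nat.card {x : Fin 8 → ℝ // IsE8Root x ∧
      ∃ n : Fin 8 → ℤ, x = ∑ i, (n i : ℝ) • bourbakiE8 i ∧ (∑ i, n i) % 2 = c}
      = S.card := by
    calc Nat.card {x : Fin 8 → ℝ // IsE8Root x ∧
        ∃ n : Fin 8 → ℤ, x = ∑ i, (n i : ℝ) • bourbakiE8 i ∧ (∑ i, n i) % 2 = c}
        = {x : Fin 8 → ℝ | IsE8Root x ∧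
        ∃ n : Fin 8 → ℤ, x = ∑ i, (n i : ℝ) • bourbakiE8 i ∧ (∑ i, n i) % 2 = c}.ncard :=
          (Nat.card_coe_set_eq _).symm
      _ = (↑S : Set (Fin 8 → ℝ)).ncard := by rw [hset]
      _ = S.card := Set.ncard_coe_finset S
  rw [h1, hS]
  have h2 : L.map (fun p => phi p.1) = (L.map Prod.fst).map phi := by
    rw [List.map_map]
    rfl
  rw [h2]
  have h3 : ((L.map Prod.fst).map phi).Nodup := hnd.map phi_inj
  rw [List.toFinset_card_of_nodup h3, List.length_map, List.length_map]

/-- In the root system of type E₈, the number of roots of odd height is 128 and the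
number of roots of even height is 112, height being the sum of the coefficients in
the simple-root basis. -/
theorem stmt11 :
    Nat.card {x : Fin 8 → ℝ // IsE8Root x ∧
      ∃ n : Fin 8 → ℤ, x = ∑ i, (n i : ℝ) • bourbakiE8 i ∧ Odd (∑ i, n i)} = 128 ∧
    Nat.card {x : Fin 8 → ℝ // IsE8Root x ∧
      ∃ n : Fin 8 → ℤ, x = ∑ i, (n i : ℝ) • bourbakiE8 i ∧ Even (∑ i, n i)} = 112 := by
  constructor
  · have h := main 1 Lodd hall_odd hci_odd hch_odd nodup_odd
    calc Nat.card {x : Fin 8 → ℝ // IsE8Root x ∧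
        ∃ n : Fin 8 → ℤ, x = ∑ i, (n i : ℝ) • bourbakiE8 i ∧ Odd (∑ i, n i)}
        = Nat.card {x : Fin 8 → ℝ // IsE8Root x ∧
        ∃ n : Fin 8 → ℤ, x = ∑ i, (n i : ℝ) • bourbakiE8 i ∧ (∑ i, n i) % 2 = 1} := by
          refine Nat.card_congr (Equiv.subtypeEquivRight fun x => ?_)
          constructor
          · rintro ⟨h1, n, h2, h3⟩; exact ⟨h1, n, h2, Int.odd_iff.mp h3⟩
          · rintro ⟨h1, n, h2, h3⟩; exact ⟨h1, n, h2, Int.odd_iff.mpr h3⟩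
      _ = Lodd.length := h
      _ = 128 := by decide
  · have h := main 0 Leven hall_even hci_even hch_even nodup_even
    calc Nat.card {x : Fin 8 → ℝ // IsE8Root x ∧
        ∃ n : Fin 8 → ℤ, x = ∑ i, (n i : ℝ) • bourbakiE8 i ∧ Even (∑ i, n i)}
        = Nat.card {x : Fin 8 → ℝ // IsE8Root x ∧
        ∃ n : Fin 8 → ℤ, x = ∑ i, (n i : ℝ) • bourbakiE8 i ∧ (∑ i, n i) % 2 = 0} := by
          refine Nat.card_congr (Equiv.subtypeEquivRight fun x => ?_)
          constructor
          · rintro ⟨h1, n, h2, h3⟩; exact ⟨h1, n, h2, Int.even_iff.mp h3⟩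
          · rintro ⟨h1, n, h2, h3⟩; exact ⟨h1, n, h2, Int.even_iff.mpr h3⟩
      _ = Leven.length := h
      _ = 112 := by decide
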